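/- Let X₁, X₂ be Banach spaces and Y₁ ⊆ X₁, Y₂ ⊆ X₂ nonzero closed subspaces, X = X₁ ⊕_∞ X₂, Y = Y₁ ⊕_∞ Y₂. If (X, Y, CB(X)) has property-(P₁), then for each i ∈ {1,2}, (X_i, Y_i, CB(X_i)) has property-(P₁). -/
import Mathlib


open Metric Set Bornology Pointwise

/-- The farthest distance `r(v,B) = sup_{b ∈ B} ‖v - b‖`. -/
noncomputable def farr {X : Type*} [NormedAddCommGroup X] (v : X) (B : Set X) : ℝ :=
  ⨆ b : B, ‖v - (b : X)‖

/-- The restricted Chebyshev radius `rad_V(B) = inf_{v ∈ V} r(v,B)`. -/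
noncomputable def rad {X : Type*} [NormedAddCommGroup X] (V B : Set X) : ℝ :=
  ⨅ v : V, farr (v : X) B

/-- The set of restricted Chebyshev centers of `B` in `V`. -/
noncomputable def cheb {X : Type*} [NormedAddCommGroup X] (V B : Set X) : Set X :=
  {v ∈ V | farr v B = rad V B}

/-- Property-(P₁) for the triplet `(X, V, CB(X))`: restricted Chebyshev centers exist for
every nonempty closed bounded set and near-centers are close to centers. -/
noncomputable def propP1 {X : Type*} [NormedAddCommGroup X] (V : Set X) : Prop :=
  ∀ B : Set X, B.Nonempty → IsClosed B → IsBounded B →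
    (cheb V B).Nonempty ∧ ∀ ε > (0 : ℝ), ∃ δ > (0 : ℝ),
      {v ∈ V | farr v B ≤ rad V B + δ} ⊆ cheb V B + closedBall 0 ε

section aux

variable {X : Type*} [NormedAddCommGroup X]

lemma bddAbove_farr {B : Set X} (hB : IsBounded B) (v : X) :
    BddAbove (Set.range fun b : B => ‖v - (b : X)‖) := by
  obtain ⟨r, hr⟩ := hB.subset_closedBall 0
  refine ⟨‖v‖ + r, ?_⟩
  rintro x ⟨b, rfl⟩
  have hb : ‖(b : X)‖ ≤ r := by
    have := hr b.2
    simpa [mem_closedBall, dist_zero_right] using this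
  calc ‖v - (b : X)‖ ≤ ‖v‖ + ‖(b : X)‖ := norm_sub_le _ _
    _ ≤ ‖v‖ + r := by linarith

lemma norm_le_farr {B : Set X} (hB : IsBounded B) {v b : X} (hb : b ∈ B) :
    ‖v - b‖ ≤ farr v B :=
  le_ciSup (bddAbove_farr hB v) ⟨b, hb⟩

lemma farr_le {B : Set X} (hne : B.Nonempty) {v : X} {r : ℝ}
    (h : ∀ b ∈ B, ‖v - b‖ ≤ r) : farr v B ≤ r := by
  haveI := hne.to_subtype
  exact ciSup_le fun b => h b b.2

lemma farr_nonneg {B : Set X} (hne : B.Nonempty) (hB : IsBounded B) (v : X) :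
    0 ≤ farr v B := by
  obtain ⟨b, hb⟩ := hne
  exact le_trans (norm_nonneg _) (norm_le_farr hB hb)

lemma bddBelow_rad {V B : Set X} (hne : B.Nonempty) (hB : IsBounded B) :
    BddBelow (Set.range fun v : V => farr (v : X) B) := by
  refine ⟨0, ?_⟩
  rintro x ⟨v, rfl⟩
  exact farr_nonneg hne hB _

lemma rad_le_farr {V B : Set X} (hne : B.Nonempty) (hB : IsBounded B) {v : X} (hv : v ∈ V) :
    rad V B ≤ farr v B :=
  ciInf_le (bddBelow_rad hne hB) ⟨v, hv⟩

end aux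

section prodaux

variable {X₁ X₂ : Type*} [NormedAddCommGroup X₁] [NormedAddCommGroup X₂]

lemma farr_prod_left {B₁ : Set X₁} (hne : B₁.Nonempty) (hb : IsBounded B₁)
    (v : X₁ × X₂) : farr v (B₁ ×ˢ {(0 : X₂)}) = max (farr v.1 B₁) ‖v.2‖ := by
  have hBb : IsBounded (B₁ ×ˢ {(0 : X₂)}) := hb.prod isBounded_singleton
  have hBne : (B₁ ×ˢ {(0 : X₂)}).Nonempty := hne.prod (singleton_nonempty _)
  apply le_antisymm
  · refine farr_le hBne fun b hb' => ?_
    obtain ⟨hb1, hb2⟩ := hb'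
    have hb2' : b.2 = 0 := hb2
    have : ‖v - b‖ = max ‖v.1 - b.1‖ ‖v.2‖ := by
      rw [Prod.norm_def]
      simp [hb2']
    rw [this]
    exact max_le_max (norm_le_farr hb hb1) le_rfl
  · apply max_le
    · refine farr_le hne fun b hb1 => ?_
      have h2 := norm_le_farr hBb (show ((b, (0 : X₂)) : X₁ × X₂) ∈ B₁ ×ˢ {(0 : X₂)}
        from ⟨hb1, rfl⟩) (v := v)
      refine le_trans ?_ h2
      rw [Prod.norm_def]
      exact le_max_left _ _
    · obtain ⟨b, hb1⟩ := hne
      have h2 := norm_le_farr hBb (show ((b, (0 : X₂)) : X₁ × X₂) ∈ B₁ ×ˢ {(0 : X₂)}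
        from ⟨hb1, rfl⟩) (v := v)
      refine le_trans ?_ h2
      rw [Prod.norm_def]
      simpa using le_max_right ‖v.1 - b‖ ‖v.2 - 0‖

lemma farr_prod_right {B₂ : Set X₂} (hne : B₂.Nonempty) (hb : IsBounded B₂)
    (v : X₁ × X₂) : farr v ({(0 : X₁)} ×ˢ B₂) = max ‖v.1‖ (farr v.2 B₂) := by
  have hBb : IsBounded ({(0 : X₁)} ×ˢ B₂) := isBounded_singleton.prod hb
  have hBne : ({(0 : X₁)} ×ˢ B₂).Nonempty := (singleton_nonempty _).prod hne
  apply le_antisymm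
  · refine farr_le hBne fun b hb' => ?_
    obtain ⟨hb1, hb2⟩ := hb'
    have hb1' : b.1 = 0 := hb1
    have : ‖v - b‖ = max ‖v.1‖ ‖v.2 - b.2‖ := by
      rw [Prod.norm_def]
      simp [hb1']
    rw [this]
    exact max_le_max le_rfl (norm_le_farr hb hb2)
  · apply max_le
    · obtain ⟨b, hb2⟩ := hne
      have h2 := norm_le_farr hBb (show (((0 : X₁), b) : X₁ × X₂) ∈ {(0 : X₁)} ×ˢ B₂
        from ⟨rfl, hb2⟩) (v := v)
      refine le_trans ?_ h2
      rw [Prod.norm_def]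
      simpa using le_max_left ‖v.1 - 0‖ ‖v.2 - b‖
    · refine farr_le hne fun b hb2 => ?_
      have h2 := norm_le_farr hBb (show (((0 : X₁), b) : X₁ × X₂) ∈ {(0 : X₁)} ×ˢ B₂
        from ⟨rfl, hb2⟩) (v := v)
      refine le_trans ?_ h2
      rw [Prod.norm_def]
      exact le_max_right _ _

lemma rad_prod_left {B₁ : Set X₁} {Y₁ : Set X₁} {Y₂ : Set X₂}
    (hne : B₁.Nonempty) (hb : IsBounded B₁)
    (hY₁ : Y₁.Nonempty) (h0 : (0 : X₂) ∈ Y₂) :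
    rad (Y₁ ×ˢ Y₂) (B₁ ×ˢ {(0 : X₂)}) = rad Y₁ B₁ := by
  have hBb : IsBounded (B₁ ×ˢ {(0 : X₂)}) := hb.prod isBounded_singleton
  have hBne : (B₁ ×ˢ {(0 : X₂)}).Nonempty := hne.prod (singleton_nonempty _)
  apply le_antisymm
  · haveI := hY₁.to_subtype
    refine le_ciInf fun v₁ => ?_
    have h1 : rad (Y₁ ×ˢ Y₂) (B₁ ×ˢ {(0 : X₂)}) ≤
        farr (((v₁ : X₁), (0 : X₂)) : X₁ × X₂) (B₁ ×ˢ {(0 : X₂)}) :=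
      rad_le_farr hBne hBb ⟨v₁.2, h0⟩
    rwa [farr_prod_left hne hb, show (((v₁ : X₁), (0 : X₂)) : X₁ × X₂).2 = 0 from rfl,
      norm_zero, max_eq_left (farr_nonneg hne hb _)] at h1
  · haveI : Nonempty ↥(Y₁ ×ˢ Y₂) := (hY₁.prod ⟨0, h0⟩).to_subtype
    refine le_ciInf fun v => ?_
    rw [farr_prod_left hne hb]
    exact le_trans (rad_le_farr hne hb v.2.1) (le_max_left _ _)

lemma rad_prod_right {B₂ : Set X₂} {Y₁ : Set X₁} {Y₂ : Set X₂}
    (hne : B₂.Nonempty) (hb : IsBounded B₂)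
    (h0 : (0 : X₁) ∈ Y₁) (hY₂ : Y₂.Nonempty) :
    rad (Y₁ ×ˢ Y₂) ({(0 : X₁)} ×ˢ B₂) = rad Y₂ B₂ := by
  have hBb : IsBounded ({(0 : X₁)} ×ˢ B₂) := isBounded_singleton.prod hb
  have hBne : ({(0 : X₁)} ×ˢ B₂).Nonempty := (singleton_nonempty _).prod hne
  apply le_antisymm
  · haveI := hY₂.to_subtype
    refine le_ciInf fun v₂ => ?_
    have h1 : rad (Y₁ ×ˢ Y₂) ({(0 : X₁)} ×ˢ B₂) ≤
        farr (((0 : X₁), (v₂ : X₂)) : X₁ × X₂) ({(0 : X₁)} ×ˢ B₂) :=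
      rad_le_farr hBne hBb ⟨h0, v₂.2⟩
    rwa [farr_prod_right hne hb, show (((0 : X₁), (v₂ : X₂)) : X₁ × X₂).1 = 0 from rfl,
      norm_zero, max_eq_right (farr_nonneg hne hb _)] at h1
  · haveI : Nonempty ↥(Y₁ ×ˢ Y₂) := (Set.Nonempty.prod ⟨0, h0⟩ hY₂).to_subtype
    refine le_ciInf fun v => ?_
    rw [farr_prod_right hne hb]
    exact le_trans (rad_le_farr hne hb v.2.2) (le_max_right _ _)

end prodaux

theorem stmt9 {X₁ X₂ : Type*} [NormedAddCommGroup X₁] [NormedSpace ℝ X₁] [CompleteSpace X₁]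
    [NormedAddCommGroup X₂] [NormedSpace ℝ X₂] [CompleteSpace X₂]
    (Y₁ : Subspace ℝ X₁) (Y₂ : Subspace ℝ X₂)
    (hY₁ne : Y₁ ≠ ⊥) (hY₁c : IsClosed (Y₁ : Set X₁))
    (hY₂ne : Y₂ ≠ ⊥) (hY₂c : IsClosed (Y₂ : Set X₂))
    (h : propP1 ((Y₁ : Set X₁) ×ˢ (Y₂ : Set X₂))) :
    propP1 (Y₁ : Set X₁) ∧ propP1 (Y₂ : Set X₂) := by
  have h01 : (0 : X₁) ∈ (Y₁ : Set X₁) := Y₁.zero_mem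
  have h02 : (0 : X₂) ∈ (Y₂ : Set X₂) := Y₂.zero_mem
  constructor
  · -- first factor
    intro B₁ hBne hBc hBb
    set B : Set (X₁ × X₂) := B₁ ×ˢ {(0 : X₂)} with hBdef
    have hBne' : B.Nonempty := hBne.prod (singleton_nonempty _)
    have hBc' : IsClosed B := hBc.prod isClosed_singleton
    have hBb' : IsBounded B := hBb.prod isBounded_singleton
    obtain ⟨hch, hdel⟩ := h B hBne' hBc' hBb'
    have hradeq : rad ((Y₁ : Set X₁) ×ˢ (Y₂ : Set X₂)) B = rad (Y₁ : Set X₁) B₁ :=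
      rad_prod_left hBne hBb ⟨0, h01⟩ h02
    have key : ∀ c ∈ cheb ((Y₁ : Set X₁) ×ˢ (Y₂ : Set X₂)) B,
        c.1 ∈ cheb (Y₁ : Set X₁) B₁ := by
      rintro c ⟨hcV, hcf⟩
      refine ⟨hcV.1, le_antisymm ?_ (rad_le_farr hBne hBb hcV.1)⟩
      rw [farr_prod_left hBne hBb] at hcf
      calc farr c.1 B₁ ≤ max (farr c.1 B₁) ‖c.2‖ := le_max_left _ _
        _ = rad ((Y₁ : Set X₁) ×ˢ (Y₂ : Set X₂)) B := hcf
        _ = rad (Y₁ : Set X₁) B₁ := hradeq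
    constructor
    · obtain ⟨c, hc⟩ := hch
      exact ⟨c.1, key c hc⟩
    · intro ε hε
      obtain ⟨δ, hδ, hsub⟩ := hdel ε hε
      refine ⟨δ, hδ, ?_⟩
      rintro v₁ ⟨hv₁Y, hv₁f⟩
      have hmem : ((v₁, (0 : X₂)) : X₁ × X₂) ∈
          {v ∈ (Y₁ : Set X₁) ×ˢ (Y₂ : Set X₂) |
            farr v B ≤ rad ((Y₁ : Set X₁) ×ˢ (Y₂ : Set X₂)) B + δ} := by
        refine ⟨⟨hv₁Y, h02⟩, ?_⟩
        rw [farr_prod_left hBne hBb, hradeq]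
        simpa [max_eq_left (farr_nonneg hBne hBb v₁)] using hv₁f
      obtain ⟨c, hc, e, he, hce⟩ := Set.mem_add.mp (hsub hmem)
      refine Set.mem_add.mpr ⟨c.1, key c hc, e.1, ?_, ?_⟩
      · rw [mem_closedBall, dist_zero_right]
        rw [mem_closedBall, dist_zero_right] at he
        exact le_trans (norm_fst_le e) he
      · have : (c + e).1 = v₁ := by rw [hce]
        simpa using this
  · -- second factor
    intro B₂ hBne hBc hBb
    set B : Set (X₁ × X₂) := {(0 : X₁)} ×ˢ B₂ with hBdef
    have hBne' : B.Nonempty := (singleton_nonempty _).prod hBne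
    have hBc' : IsClosed B := isClosed_singleton.prod hBc
    have hBb' : IsBounded B := isBounded_singleton.prod hBb
    obtain ⟨hch, hdel⟩ := h B hBne' hBc' hBb'
    have hradeq : rad ((Y₁ : Set X₁) ×ˢ (Y₂ : Set X₂)) B = rad (Y₂ : Set X₂) B₂ :=
      rad_prod_right hBne hBb h01 ⟨0, h02⟩
    have key : ∀ c ∈ cheb ((Y₁ : Set X₁) ×ˢ (Y₂ : Set X₂)) B,
        c.2 ∈ cheb (Y₂ : Set X₂) B₂ := by
      rintro c ⟨hcV, hcf⟩
      refine ⟨hcV.2, le_antisymm ?_ (rad_le_farr hBne hBb hcV.2)⟩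
      rw [farr_prod_right hBne hBb] at hcf
      calc farr c.2 B₂ ≤ max ‖c.1‖ (farr c.2 B₂) := le_max_right _ _
        _ = rad ((Y₁ : Set X₁) ×ˢ (Y₂ : Set X₂)) B := hcf
        _ = rad (Y₂ : Set X₂) B₂ := hradeq
    constructor
    · obtain ⟨c, hc⟩ := hch
      exact ⟨c.2, key c hc⟩
    · intro ε hε
      obtain ⟨δ, hδ, hsub⟩ := hdel ε hε
      refine ⟨δ, hδ, ?_⟩
      rintro v₂ ⟨hv₂Y, hv₂f⟩
      have hmem : (((0 : X₁), v₂) : X₁ × X₂) ∈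
          {v ∈ (Y₁ : Set X₁) ×ˢ (Y₂ : Set X₂) |
            farr v B ≤ rad ((Y₁ : Set X₁) ×ˢ (Y₂ : Set X₂)) B + δ} := by
        refine ⟨⟨h01, hv₂Y⟩, ?_⟩
        rw [farr_prod_right hBne hBb, hradeq]
        simpa [max_eq_right (farr_nonneg hBne hBb v₂)] using hv₂f
      obtain ⟨c, hc, e, he, hce⟩ := Set.mem_add.mp (hsub hmem)
      refine Set.mem_add.mpr ⟨c.2, key c hc, e.2, ?_, ?_⟩
      · rw [mem_closedBall, dist_zero_right]
        rw [mem_closedBall, dist_zero_right] at he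
        exact le_trans (norm_snd_le e) he
      · have : (c + e).2 = v₂ := by rw [hce]
        simpa using this
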